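/- Let $\Lambda \subseteq \mathbb{R}^d$, let $w: \Lambda \to [0,\infty)$ with $\int_\Lambda w(\lambda)\,d\lambda = 1$, and for each $\lambda \in \Lambda$ let $\phi_\lambda$ be a Bernoulli random variable with $\mathbb{E}[\phi_\lambda] \le \alpha$, jointly measurable in $\lambda$. Let $U \sim \mathrm{Unif}(0,1)$ be independent of everything. Then $\mathbb{P}\left(\int_\Lambda w(\lambda)\,\phi_\lambda\, d\lambda \ge \frac{1-U}{2}\right) \le 2\alpha$. -/

import Mathlib

open MeasureTheory ProbabilityTheory

/-- Continuum randomized weighted majority vote: for a jointly measurable family of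
Bernoulli random variables `φ λ` (indexed by `λ ∈ Λ ⊆ ℝ^d`) each with mean at most
`α`, a nonnegative weight function `w` integrating to 1 over `Λ`, and an independent
uniform `U` on `[0,1]`, we have `P(∫_Λ w(λ) φ_λ dλ ≥ (1-U)/2) ≤ 2α`. -/
theorem continuum_randomized_weighted_majority {Ω : Type*} [MeasurableSpace Ω]
    (μ : Measure Ω) [IsProbabilityMeasure μ]
    (d : ℕ) (Λ : Set (Fin d → ℝ)) (hΛ : MeasurableSet Λ)
    (α : ℝ) (hα0 : 0 ≤ α) (hα1 : α ≤ 1)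
    (w : (Fin d → ℝ) → ℝ) (hw0 : ∀ l, 0 ≤ w l)
    (hwint : ∫ l in Λ, w l = 1)
    (φ : (Fin d → ℝ) → Ω → ℝ)
    (hmeas : Measurable (fun q : (Fin d → ℝ) × Ω => φ q.1 q.2))
    (h01 : ∀ l ∈ Λ, ∀ ω, φ l ω = 0 ∨ φ l ω = 1)
    (hexp : ∀ l ∈ Λ, ∫ ω, φ l ω ∂μ ≤ α)
    (U : Ω → ℝ) (hU : Measurable U)
    (hUunif : μ.map U = (volume.restrict (Set.Icc (0 : ℝ) 1)))
    (hindep : IndepFun U (fun ω => ∫ l in Λ, w l * φ l ω) μ) :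
    μ {ω | ∫ l in Λ, w l * φ l ω ≥ (1 - U ω) / 2} ≤ ENNReal.ofReal (2 * α) := by
  set ν := volume.restrict Λ with hν
  set X := fun ω => ∫ l in Λ, w l * φ l ω with hXdef
  have hwInt : Integrable w ν := by
    by_contra h
    rw [show (∫ l in Λ, w l) = ∫ l, w l ∂ν from rfl, integral_undef h] at hwint
    norm_num at hwint
  have hφ0 : ∀ l ∈ Λ, ∀ ω, 0 ≤ φ l ω := fun l hl ω => by
    rcases h01 l hl ω with h | h <;> simp [h]
  have hφ1 : ∀ l ∈ Λ, ∀ ω, φ l ω ≤ 1 := fun l hl ω => by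
    rcases h01 l hl ω with h | h <;> simp [h]
  have hFsm : AEStronglyMeasurable (fun p : (Fin d → ℝ) × Ω => w p.1 * φ p.1 p.2) (ν.prod μ) :=
    hwInt.aestronglyMeasurable.comp_fst.mul hmeas.aestronglyMeasurable
  -- a.e. the first coordinate lies in Λ
  have haeΛ : ∀ᵐ p ∂(ν.prod μ), p.1 ∈ Λ := by
    rw [ae_iff]
    have hset : {p : (Fin d → ℝ) × Ω | ¬ p.1 ∈ Λ} = Λᶜ ×ˢ Set.univ := by
      ext p; simp
    rw [hset, Measure.prod_prod]
    simp [hν, Measure.restrict_apply hΛ.compl]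
  have hbound : ∀ᵐ p ∂(ν.prod μ), ‖w p.1 * φ p.1 p.2‖ ≤ w p.1 := by
    filter_upwards [haeΛ] with p hp
    rw [Real.norm_eq_abs, abs_mul, abs_of_nonneg (hw0 p.1),
      abs_of_nonneg (hφ0 p.1 hp p.2)]
    calc w p.1 * φ p.1 p.2 ≤ w p.1 * 1 :=
          mul_le_mul_of_nonneg_left (hφ1 p.1 hp p.2) (hw0 p.1)
      _ = w p.1 := mul_one _
  have hwlint : ∫⁻ l, ENNReal.ofReal (w l) ∂ν = 1 := by
    rw [← ofReal_integral_eq_lintegral_ofReal hwInt (Filter.Eventually.of_forall hw0)]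
    rw [show (∫ l, w l ∂ν) = ∫ l in Λ, w l from rfl, hwint]; simp
  have hwProd : ∫⁻ p, ENNReal.ofReal (w p.1) ∂(ν.prod μ) = 1 := by
    rw [lintegral_prod _ hwInt.aestronglyMeasurable.comp_fst.aemeasurable.ennreal_ofReal]
    simp only [lintegral_const, measure_univ, mul_one]
    exact hwlint
  have hFint : Integrable (fun p : (Fin d → ℝ) × Ω => w p.1 * φ p.1 p.2) (ν.prod μ) := by
    refine ⟨hFsm, ?_⟩
    rw [hasFiniteIntegral_iff_norm]
    calc ∫⁻ p, ENNReal.ofReal ‖w p.1 * φ p.1 p.2‖ ∂(ν.prod μ)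
        ≤ ∫⁻ p, ENNReal.ofReal (w p.1) ∂(ν.prod μ) := by
          refine lintegral_mono_ae ?_
          filter_upwards [hbound] with p hp
          exact ENNReal.ofReal_le_ofReal hp
      _ = 1 := hwProd
      _ < ⊤ := ENNReal.one_lt_top
  have hXint : Integrable X μ := hFint.integral_prod_right
  have hXsm : AEStronglyMeasurable X μ := hXint.aestronglyMeasurable
  have hXint_l : ∀ ω, Integrable (fun l => w l * φ l ω) ν := by
    intro ω
    refine Integrable.mono hwInt
      (hwInt.aestronglyMeasurable.mul
        ((hmeas.comp (measurable_id.prodMk measurable_const)).aestronglyMeasurable)) ?_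
    filter_upwards [ae_restrict_mem hΛ] with l hl
    rw [Real.norm_eq_abs, Real.norm_eq_abs, abs_mul, abs_of_nonneg (hw0 l),
      abs_of_nonneg (hφ0 l hl ω)]
    calc w l * φ l ω ≤ w l * 1 := mul_le_mul_of_nonneg_left (hφ1 l hl ω) (hw0 l)
      _ = w l := mul_one _
  have hX0 : ∀ ω, 0 ≤ X ω := fun ω =>
    setIntegral_nonneg hΛ fun l hl => mul_nonneg (hw0 l) (hφ0 l hl ω)
  have hX1 : ∀ ω, X ω ≤ 1 := by
    intro ω
    rw [hXdef, ← hwint]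
    refine setIntegral_mono_on (hXint_l ω) hwInt hΛ fun l hl => ?_
    calc w l * φ l ω ≤ w l * 1 := mul_le_mul_of_nonneg_left (hφ1 l hl ω) (hw0 l)
      _ = w l := mul_one _
  -- expectation bound via Fubini
  set g : (Fin d → ℝ) → ℝ := fun l => ∫ ω, w l * φ l ω ∂μ with hgdef
  have hgsm : AEStronglyMeasurable g ν := hFint.1.integral_prod_right'
  have hgval : ∀ l, g l = w l * ∫ ω, φ l ω ∂μ := fun l => integral_const_mul _ _
  have hφint : ∀ l ∈ Λ, (0:ℝ) ≤ ∫ ω, φ l ω ∂μ := fun l hl =>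
    integral_nonneg fun ω => hφ0 l hl ω
  have hgInt : Integrable g ν := by
    refine Integrable.mono hwInt hgsm ?_
    filter_upwards [ae_restrict_mem hΛ] with l hl
    rw [hgval l, Real.norm_eq_abs, Real.norm_eq_abs, abs_mul, abs_of_nonneg (hw0 l),
      abs_of_nonneg (hφint l hl)]
    calc w l * ∫ ω, φ l ω ∂μ ≤ w l * 1 :=
          mul_le_mul_of_nonneg_left (le_trans (hexp l hl) hα1) (hw0 l)
      _ = w l := mul_one _
  have hEX : ∫ ω, X ω ∂μ ≤ α := by
    have hswap : ∫ l, g l ∂ν = ∫ ω, X ω ∂μ := integral_integral_swap hFint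
    rw [← hswap]
    calc ∫ l, g l ∂ν ≤ ∫ l, w l * α ∂ν := by
          refine setIntegral_mono_on hgInt (hwInt.mul_const α) hΛ fun l hl => ?_
          rw [hgval l]
          exact mul_le_mul_of_nonneg_left (hexp l hl) (hw0 l)
      _ = α := by
          rw [integral_mul_const, show (∫ l, w l ∂ν) = ∫ l in Λ, w l from rfl, hwint, one_mul]
  -- probability computation
  have hXae : AEMeasurable X μ := hXsm.aemeasurable
  set S : Set (ℝ × ℝ) := {p | p.1 ≥ (1 - p.2) / 2} with hSdef
  have hS : MeasurableSet S :=
    measurableSet_le (by fun_prop) (by fun_prop)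
  have hmap : μ.map (fun ω => (X ω, U ω)) = (μ.map X).prod (μ.map U) :=
    (indepFun_iff_map_prod_eq_prod_map_map hXae hU.aemeasurable).1 hindep.symm
  have hpre : {ω | X ω ≥ (1 - U ω) / 2} = (fun ω => (X ω, U ω)) ⁻¹' S := rfl
  rw [show {ω | ∫ l in Λ, w l * φ l ω ≥ (1 - U ω) / 2} = {ω | X ω ≥ (1 - U ω) / 2} from rfl,
    hpre, ← Measure.map_apply_of_aemeasurable (hXae.prodMk hU.aemeasurable) hS, hmap,
    Measure.prod_apply hS]
  have hslice : ∀ x : ℝ, (μ.map U) (Prod.mk x ⁻¹' S) ≤ ENNReal.ofReal (2 * x) := by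
    intro x
    have h1 : Prod.mk x ⁻¹' S = Set.Ici (1 - 2 * x) := by
      ext u
      simp only [hSdef, Set.mem_preimage, Set.mem_setOf_eq, Set.mem_Ici, ge_iff_le]
      constructor
      · intro h; linarith
      · intro h; linarith
    rw [h1, hUunif, Measure.restrict_apply measurableSet_Ici]
    calc volume (Set.Ici (1 - 2 * x) ∩ Set.Icc (0:ℝ) 1)
        ≤ volume (Set.Icc (max (1 - 2 * x) 0) 1) := by
          refine measure_mono ?_
          rintro y ⟨hy1, hy2, hy3⟩
          exact ⟨max_le hy1 hy2, hy3⟩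
      _ = ENNReal.ofReal (1 - max (1 - 2 * x) 0) := by rw [Real.volume_Icc]
      _ ≤ ENNReal.ofReal (2 * x) := by
          refine ENNReal.ofReal_le_ofReal ?_
          have := le_max_left (1 - 2 * x) 0
          linarith
  calc ∫⁻ x, (μ.map U) (Prod.mk x ⁻¹' S) ∂(μ.map X)
      ≤ ∫⁻ x, ENNReal.ofReal (2 * x) ∂(μ.map X) := lintegral_mono hslice
    _ = ∫⁻ ω, ENNReal.ofReal (2 * X ω) ∂μ :=
        lintegral_map' (ENNReal.measurable_ofReal.comp (measurable_const_mul 2)).aemeasurable hXae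
    _ = ENNReal.ofReal (∫ ω, 2 * X ω ∂μ) :=
        (ofReal_integral_eq_lintegral_ofReal (hXint.const_mul 2)
          (Filter.Eventually.of_forall fun ω => mul_nonneg (by norm_num) (hX0 ω))).symm
    _ ≤ ENNReal.ofReal (2 * α) := by
        rw [integral_const_mul]
        exact ENNReal.ofReal_le_ofReal (by linarith [hEX])
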